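/- arXiv:math/0003192 — 4 statements merged into one kernel-verified Lean document; each statement's English description precedes it below -/
import Mathlib

section
/- Let H be analytic on a neighborhood of a point z ∈ ℂ^d with H(z) = 0 and z_d·H_d(z) ≠ 0, and suppose z is a locally minimal point of the zero set of H: there is a neighborhood U of z such that every w ∈ U with H(w) = 0 and |w_j| ≤ |z_j| for all j satisfies |w_j| = |z_j| for all j. Then for every j < d the quantity z_j·H_j(z)/(z_d·H_d(z)) is a nonnegative real number. -/
open Filter Topology

/-- Partial derivative of `H` in the `j`-th coordinate direction. -/
noncomputable def pdj {m : ℕ} (H : (Fin m → ℂ) → ℂ) (z : Fin m → ℂ) (j : Fin m) : ℂ :=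
  fderiv ℂ H z (Pi.single j 1)


set_option maxHeartbeats 1000000 in
lemma curve_exists {m : ℕ} (H : (Fin m → ℂ) → ℂ) (z : Fin m → ℂ) (jc d : Fin m)
    (hjd : jc ≠ d) (hH : AnalyticAt ℂ H z) (hz0 : H z = 0)
    (hHd : fderiv ℂ H z (Pi.single d 1) ≠ 0) :
    ∃ β : ℂ → ℂ, β 0 = z d ∧
      HasDerivAt β ((0 - fderiv ℂ H z (Pi.single jc 1) * z jc) / fderiv ℂ H z (Pi.single d 1)) 0 ∧
      ∀ᶠ t in 𝓝 (0:ℂ),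
        H (fun k => if k = jc then z jc * (1 + t) else if k = d then β t else z k) = 0 := by
  set Hj := fderiv ℂ H z (Pi.single jc 1) with hHjdef
  set Hd := fderiv ℂ H z (Pi.single d 1) with hHddef
  set M : ℂ × ℂ →L[ℂ] (Fin m → ℂ) :=
    (ContinuousLinearMap.fst ℂ ℂ ℂ).smulRight (Pi.single jc 1) +
    (ContinuousLinearMap.snd ℂ ℂ ℂ).smulRight (Pi.single d 1) with hM
  set c0 : Fin m → ℂ := z - M (z jc, z d) with hc0
  have hc0z : c0 + M (z jc, z d) = z := sub_add_cancel z _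
  set G : ℂ × ℂ → ℂ := fun p => H (c0 + M p) with hGdef
  set D : ℂ × ℂ →L[ℂ] ℂ := (fderiv ℂ H z).comp M with hD
  have haff : HasStrictFDerivAt (fun p : ℂ × ℂ => c0 + M p) M (z jc, z d) :=
    (M.hasStrictFDerivAt).const_add c0
  have hHz : HasStrictFDerivAt H (fderiv ℂ H z) (c0 + M (z jc, z d)) := by
    rw [hc0z]; exact hH.hasStrictFDerivAt
  have hG : HasStrictFDerivAt G D (z jc, z d) := by
    have h := hHz.comp (z jc, z d) haff
    exact h
  set A : ℂ × ℂ →L[ℂ] ℂ × ℂ := (ContinuousLinearMap.fst ℂ ℂ ℂ).prod D with hA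
  set Φ : ℂ × ℂ → ℂ × ℂ := fun p => (p.1, G p) with hΦdef
  have hΦ : HasStrictFDerivAt Φ A (z jc, z d) :=
    HasStrictFDerivAt.prodMk ((ContinuousLinearMap.fst ℂ ℂ ℂ).hasStrictFDerivAt) hG
  have hMp : ∀ p : ℂ × ℂ, M p
      = p.1 • (Pi.single jc 1 : Fin m → ℂ) + p.2 • (Pi.single d 1 : Fin m → ℂ) := by
    intro p
    simp [hM]
  have hAval : ∀ p : ℂ × ℂ, A p = (p.1, Hj * p.1 + Hd * p.2) := by
    intro p
    simp only [hA, hD, ContinuousLinearMap.prod_apply, ContinuousLinearMap.comp_apply,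
      ContinuousLinearMap.coe_fst', hMp p, map_add, map_smul, smul_eq_mul]
    rw [Prod.ext_iff]
    exact ⟨rfl, by rw [← hHjdef, ← hHddef]; ring⟩
  set e : (ℂ × ℂ) ≃ₗ[ℂ] ℂ × ℂ :=
    { toFun := fun p => (p.1, Hj * p.1 + Hd * p.2)
      map_add' := by
        rintro ⟨a, b⟩ ⟨c, d'⟩
        simp only [Prod.mk_add_mk, Prod.mk.injEq]
        exact ⟨trivial, by ring⟩
      map_smul' := by
        rintro c ⟨a, b⟩
        simp only [Prod.smul_mk, smul_eq_mul, RingHom.id_apply, Prod.mk.injEq]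
        exact ⟨trivial, by ring⟩
      invFun := fun q => (q.1, (q.2 - Hj * q.1) / Hd)
      left_inv := by
        rintro ⟨a, b⟩
        simp only [Prod.mk.injEq]
        refine ⟨trivial, ?_⟩
        field_simp
        ring
      right_inv := by
        rintro ⟨a, b⟩
        simp only [Prod.mk.injEq]
        refine ⟨trivial, ?_⟩
        field_simp
        ring } with he
  set A' := e.toContinuousLinearEquiv with hA'
  have hcoe : (A' : (ℂ × ℂ) →L[ℂ] ℂ × ℂ) = A := by
    apply ContinuousLinearMap.ext; intro p
    rw [hAval p]
    rfl
  have hΦ' : HasStrictFDerivAt Φ (A' : (ℂ × ℂ) →L[ℂ] ℂ × ℂ) (z jc, z d) := hcoe ▸ hΦ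
  have hΦ0 : Φ (z jc, z d) = (z jc, 0) := by
    simp only [hΦdef, hGdef, hc0z, hz0]
  set ψ : ℂ × ℂ → ℂ × ℂ := hΦ'.localInverse Φ A' (z jc, z d) with hψ
  set η : ℂ → ℂ × ℂ := fun t => (z jc * (1 + t), 0) with hη
  have hη0 : η 0 = Φ (z jc, z d) := by simp [hη, hΦ0]
  set β : ℂ → ℂ := fun t => (ψ (η t)).2 with hβdef
  have hψΦ : ψ (Φ (z jc, z d)) = (z jc, z d) := hΦ'.localInverse_apply_image
  refine ⟨β, ?_, ?_, ?_⟩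
  · show (ψ (η 0)).2 = z d
    rw [hη0, hψΦ]
  · have hinv : HasStrictFDerivAt ψ ((A'.symm : ℂ × ℂ →L[ℂ] ℂ × ℂ)) (η 0) := by
      rw [hη0]; exact hΦ'.to_localInverse
    have hηd : HasDerivAt η (z jc, 0) 0 := by
      have h1 : HasDerivAt (fun t : ℂ => z jc * (1 + t)) (z jc) 0 := by
        simpa using ((hasDerivAt_id (0:ℂ)).const_add 1).const_mul (z jc)
      exact HasDerivAt.prodMk h1 (hasDerivAt_const 0 0)
    have hcomp : HasDerivAt (fun t => ψ (η t)) ((A'.symm : ℂ × ℂ →L[ℂ] ℂ × ℂ) (z jc, 0)) 0 :=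
      hinv.hasFDerivAt.comp_hasDerivAt 0 hηd
    have hsnd : HasDerivAt β (((A'.symm : ℂ × ℂ →L[ℂ] ℂ × ℂ) (z jc, 0)).2) 0 :=
      (ContinuousLinearMap.snd ℂ ℂ ℂ).hasFDerivAt.comp_hasDerivAt 0 hcomp
    have hval : ((A'.symm : ℂ × ℂ →L[ℂ] ℂ × ℂ) (z jc, 0)).2 = (0 - Hj * z jc) / Hd := rfl
    rw [hval] at hsnd
    exact hsnd
  · have hev : ∀ᶠ y in 𝓝 (Φ (z jc, z d)), Φ (ψ y) = y := hΦ'.eventually_right_inverse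
    have hηc : Continuous η := by
      exact (continuous_const.mul (continuous_const.add continuous_id)).prodMk continuous_const
    have hηt : Tendsto η (𝓝 0) (𝓝 (Φ (z jc, z d))) := by
      rw [← hη0]
      exact hηc.tendsto 0
    have hev2 : ∀ᶠ t in 𝓝 (0:ℂ), Φ (ψ (η t)) = η t := hηt.eventually hev
    filter_upwards [hev2] with t ht
    have h1 : (ψ (η t)).1 = z jc * (1 + t) := congrArg Prod.fst ht
    have h2 : G (ψ (η t)) = 0 := congrArg Prod.snd ht
    have hfun : (fun k => if k = jc then z jc * (1 + t) else if k = d then β t else z k)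
        = c0 + M (ψ (η t)) := by
      funext k
      have hrhs : (c0 + M (ψ (η t))) k
          = z k - (z jc * (Pi.single jc 1 : Fin m → ℂ) k + z d * (Pi.single d 1 : Fin m → ℂ) k)
            + ((ψ (η t)).1 * (Pi.single jc 1 : Fin m → ℂ) k
              + (ψ (η t)).2 * (Pi.single d 1 : Fin m → ℂ) k) := by
        rw [hc0, hMp (z jc, z d), hMp (ψ (η t))]
        simp [smul_eq_mul]
      rw [hrhs]
      by_cases hk1 : k = jc
      · subst hk1
        rw [Pi.single_eq_same, Pi.single_eq_of_ne hjd, h1]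
        simp
      · by_cases hk2 : k = d
        · subst hk2
          rw [Pi.single_eq_same, Pi.single_eq_of_ne (Ne.symm hjd)]
          simp [hk1, hβdef]
        · rw [Pi.single_eq_of_ne hk1, Pi.single_eq_of_ne hk2]
          simp [hk1, hk2]
    rw [hfun]
    exact h2

set_option maxHeartbeats 1000000 in
/-- at a locally minimal simple pole, the quantities
z_j·H_j(z)/(z_d·H_d(z)) are nonnegative reals (Lemma 2.1 of Pemantle–Wilson,
"Asymptotics of multivariate sequences I"). Here the number of variables is d = n+1
and the last coordinate plays the role of the d-th. -/
theorem statement4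
    (n : ℕ) (H : (Fin (n + 1) → ℂ) → ℂ) (z : Fin (n + 1) → ℂ)
    (hH : AnalyticAt ℂ H z) (hz0 : H z = 0)
    (hlast : z (Fin.last n) * pdj H z (Fin.last n) ≠ 0)
    -- z is a locally minimal point of the zero set of H
    (hmin : ∃ U ∈ 𝓝 z, ∀ w ∈ U, H w = 0 →
      (∀ j, ‖w j‖ ≤ ‖z j‖) →
      (∀ j, ‖w j‖ = ‖z j‖)) :
    ∀ j : Fin n, ∃ t : ℝ, 0 ≤ t ∧
      z j.castSucc * pdj H z j.castSucc / (z (Fin.last n) * pdj H z (Fin.last n)) = (t : ℂ) := by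
  obtain ⟨U, hU, hUmin⟩ := hmin
  intro j
  have hjd : j.castSucc ≠ Fin.last n := (Fin.castSucc_lt_last j).ne
  set jc := j.castSucc with hjc
  set d := Fin.last n with hd
  set Hj := pdj H z jc with hHj
  set Hd := pdj H z d with hHdd
  have hzd : z d ≠ 0 := left_ne_zero_of_mul hlast
  have hHd : Hd ≠ 0 := right_ne_zero_of_mul hlast
  by_cases hzj : z jc * Hj = 0
  · exact ⟨0, le_refl 0, by rw [hzj]; simp⟩
  have hzjc : z jc ≠ 0 := left_ne_zero_of_mul hzj
  set r := z jc * Hj / (z d * Hd) with hr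
  obtain ⟨β, hβ0, hβd0, hβev⟩ := curve_exists H z jc d hjd hH hz0 hHd
  have hβd : HasDerivAt β ((0 - Hj * z jc) / Hd) 0 := hβd0
  set m0 : ℂ := (0 - Hj * z jc) / Hd with hm0
  set w : ℂ → (Fin (n + 1) → ℂ) :=
    fun t k => if k = jc then z jc * (1 + t) else if k = d then β t else z k with hw
  have hβev' : ∀ᶠ t in 𝓝 (0:ℂ), H (w t) = 0 := hβev
  have hβc : ContinuousAt β 0 := hβd.continuousAt
  have hwz : Tendsto w (𝓝 0) (𝓝 z) := by
    rw [tendsto_pi_nhds]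
    intro k
    by_cases hk1 : k = jc
    · subst hk1
      have h1 : Tendsto (fun t : ℂ => z jc * (1 + t)) (𝓝 0) (𝓝 (z jc * (1 + 0))) :=
        (continuous_const.mul (continuous_const.add continuous_id)).tendsto 0
      simpa [hw] using h1
    · by_cases hk2 : k = d
      · subst hk2
        have h1 := hβc.tendsto
        rw [hβ0] at h1
        simpa [hw, hk1] using h1
      · simpa [hw, hk1, hk2] using (tendsto_const_nhds : Tendsto (fun _ : ℂ => z k) (𝓝 0) (𝓝 (z k)))
  have key : ∀ s : ℂ, s.re < 0 → (s * r).re ≤ 0 := by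
    intro s hsre
    have hs0 : s ≠ 0 := by
      intro h; rw [h] at hsre; simp at hsre
    have hg : HasDerivAt (fun ε : ℝ => (ε : ℂ) * s) s 0 := by
      simpa [Complex.real_smul] using (hasDerivAt_id (0:ℝ)).smul_const s
    have hβF : HasFDerivAt β ((1 : ℂ →L[ℂ] ℂ).smulRight m0) ((fun ε : ℝ => (ε : ℂ) * s) 0) := by
      have h := hasDerivAt_iff_hasFDerivAt.1 hβd
      have he : (1 : ℂ →L[ℂ] ℂ).smulRight m0 = ContinuousLinearMap.toSpanSingleton ℂ m0 := by
        ext; simp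
      rw [he]
      simpa using h
    have hf : HasDerivAt (fun ε : ℝ => β ((ε : ℂ) * s)) (s * m0) 0 := by
      have h1 := (hβF.restrictScalars ℝ).comp_hasDerivAt 0 hg
      simpa [smul_eq_mul, Function.comp_def] using h1
    have hfre : HasDerivAt (fun ε : ℝ => (β ((ε : ℂ) * s)).re) ((s * m0).re) 0 := by
      simpa [Function.comp_def] using (Complex.reCLM.hasFDerivAt).comp_hasDerivAt 0 hf
    have hfim : HasDerivAt (fun ε : ℝ => (β ((ε : ℂ) * s)).im) ((s * m0).im) 0 := by
      simpa [Function.comp_def] using (Complex.imCLM.hasFDerivAt).comp_hasDerivAt 0 hf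
    have hq0 := (hfre.mul hfre).add (hfim.mul hfim)
    simp only [Complex.ofReal_zero, zero_mul, hβ0] at hq0
    have hq : HasDerivAt (fun ε : ℝ => Complex.normSq (β ((ε : ℂ) * s)))
        ((s * m0).re * (z d).re + (z d).re * (s * m0).re
          + ((s * m0).im * (z d).im + (z d).im * (s * m0).im)) 0 := by
      simpa only [Complex.normSq_apply, Pi.mul_def, Pi.add_def] using hq0
    have htends : Tendsto (fun ε : ℝ => (ε : ℂ) * s) (𝓝[>] 0) (𝓝 0) := by
      have h1 : Tendsto (fun ε : ℝ => (ε : ℂ) * s) (𝓝 0) (𝓝 (((0:ℝ) : ℂ) * s)) :=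
        (Complex.continuous_ofReal.mul continuous_const).tendsto 0
      simpa using h1.mono_left nhdsWithin_le_nhds
    have E1 : ∀ᶠ ε : ℝ in 𝓝[>] 0, H (w ((ε : ℂ) * s)) = 0 := htends.eventually hβev'
    have E2 : ∀ᶠ ε : ℝ in 𝓝[>] 0, w ((ε : ℂ) * s) ∈ U :=
      htends.eventually (hwz.eventually (eventually_of_mem hU fun y hy => hy))
    have hns : 0 < Complex.normSq s := Complex.normSq_pos.2 hs0
    have hδ : (0:ℝ) < -s.re / Complex.normSq s := div_pos (by linarith) hns
    have E3 : ∀ᶠ ε : ℝ in 𝓝[>] 0,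
        ‖z jc * (1 + (ε : ℂ) * s)‖ < ‖z jc‖ := by
      have hIoo : Set.Ioo (0:ℝ) (-s.re / Complex.normSq s) ∈ 𝓝[>] (0:ℝ) :=
        Ioo_mem_nhdsGT_of_mem ⟨le_refl 0, hδ⟩
      filter_upwards [hIoo] with ε hε
      have hε2 : ε * Complex.normSq s < -s.re := (lt_div_iff₀ hns).1 hε.2
      have h1 : Complex.normSq (1 + (ε : ℂ) * s) < 1 := by
        rw [Complex.normSq_apply]
        simp only [Complex.add_re, Complex.add_im, Complex.one_re, Complex.one_im,
          Complex.mul_re, Complex.mul_im, Complex.ofReal_re, Complex.ofReal_im]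
        rw [Complex.normSq_apply] at hε2
        nlinarith [hε.1, hε2, hsre]
      have h2 : ‖1 + (ε : ℂ) * s‖ < 1 := by
        rw [Complex.norm_def, ← Real.sqrt_one]
        exact Real.sqrt_lt_sqrt (Complex.normSq_nonneg _) (by simpa using h1)
      calc ‖z jc * (1 + (ε : ℂ) * s)‖
          = ‖z jc‖ * ‖1 + (ε : ℂ) * s‖ := norm_mul _ _
        _ < ‖z jc‖ * 1 := by
            exact mul_lt_mul_of_pos_left h2 (norm_pos_iff.mpr hzjc)
        _ = ‖z jc‖ := mul_one _
    have E4 : ∀ᶠ ε : ℝ in 𝓝[>] 0,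
        Complex.normSq (z d) ≤ Complex.normSq (β ((ε : ℂ) * s)) := by
      filter_upwards [E1, E2, E3] with ε h1 h2 h3
      by_contra hlt
      push_neg at hlt
      have hle : ∀ k, ‖w ((ε : ℂ) * s) k‖ ≤ ‖z k‖ := by
        intro k
        by_cases hk1 : k = jc
        · subst hk1
          simp only [hw, if_pos rfl]
          exact le_of_lt h3
        · by_cases hk2 : k = d
          · subst hk2
            simp only [hw, if_neg hk1, if_pos rfl]
            rw [Complex.norm_def, Complex.norm_def]
            exact Real.sqrt_le_sqrt (le_of_lt hlt)
          · simp [hw, hk1, hk2]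
      have heq := hUmin _ h2 h1 hle jc
      simp only [hw, if_pos rfl] at heq
      exact absurd heq (ne_of_lt h3)
    have hq' := hq.hasDerivWithinAt (s := Set.Ioi (0:ℝ))
    rw [hasDerivWithinAt_iff_tendsto_slope' (by simp : (0:ℝ) ∉ Set.Ioi (0:ℝ))] at hq'
    have hD : 0 ≤ (s * m0).re * (z d).re + (z d).re * (s * m0).re
        + ((s * m0).im * (z d).im + (z d).im * (s * m0).im) := by
      refine ge_of_tendsto hq' ?_
      filter_upwards [E4, self_mem_nhdsWithin] with ε hε4 hεpos
      rw [slope_def_field]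
      have hq0val : Complex.normSq (β (((0:ℝ) : ℂ) * s)) = Complex.normSq (z d) := by
        simp [hβ0]
      rw [hq0val]
      apply div_nonneg
      · linarith
      · simp only [Set.mem_Ioi] at hεpos; linarith
    have hrel : s * m0 = -(s * r) * z d := by
      rw [hm0, hr]
      field_simp
      ring
    rw [hrel] at hD
    have hzd2 : 0 < Complex.normSq (z d) := Complex.normSq_pos.2 hzd
    rw [Complex.normSq_apply] at hzd2
    simp only [Complex.neg_re, Complex.neg_im, Complex.mul_re, Complex.mul_im] at hD ⊢
    nlinarith [hD, hzd2]
  have hre : 0 ≤ r.re := by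
    have h1 := key (-1) (by norm_num)
    simp only [Complex.mul_re, Complex.neg_re, Complex.neg_im, Complex.one_re,
      Complex.one_im] at h1
    linarith
  have t0 : Tendsto (fun δ : ℝ => δ * r.re) (𝓝[>] (0:ℝ)) (𝓝 0) := by
    have h1 : Tendsto (fun δ : ℝ => δ * r.re) (𝓝 0) (𝓝 (0 * r.re)) :=
      (continuous_id.mul continuous_const).tendsto 0
    simpa using h1.mono_left nhdsWithin_le_nhds
  have t0' : Tendsto (fun δ : ℝ => -(δ * r.re)) (𝓝[>] (0:ℝ)) (𝓝 0) := by
    simpa using t0.neg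
  have him1 : r.im ≤ 0 := by
    refine ge_of_tendsto t0 ?_
    filter_upwards [self_mem_nhdsWithin] with δ hδ
    simp only [Set.mem_Ioi] at hδ
    have h1 := key (-(δ:ℂ) - Complex.I) (by simp [hδ])
    simp only [Complex.mul_re, Complex.sub_re, Complex.sub_im, Complex.neg_re, Complex.neg_im,
      Complex.I_re, Complex.I_im, Complex.ofReal_re, Complex.ofReal_im] at h1
    linarith
  have him2 : 0 ≤ r.im := by
    refine le_of_tendsto t0' ?_
    filter_upwards [self_mem_nhdsWithin] with δ hδ
    simp only [Set.mem_Ioi] at hδ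
    have h1 := key (-(δ:ℂ) + Complex.I) (by simp [hδ])
    simp only [Complex.mul_re, Complex.add_re, Complex.add_im, Complex.neg_re, Complex.neg_im,
      Complex.I_re, Complex.I_im, Complex.ofReal_re, Complex.ofReal_im] at h1
    linarith
  refine ⟨r.re, hre, ?_⟩

  exact Complex.ext (by simp) (by simp [le_antisymm him1 him2])
end

section
/- Let H be analytic on a neighborhood of the closed polydisk D(z) ⊆ ℂ^d, suppose all coordinates of z are nonzero, H(z) = 0, H_d(z) ≠ 0, and z is the only zero of H in D(z) (strict minimality). Let g parametrize the zero set of H near z, let r ∈ ℝ^d with r_d ≠ 0, and form f̃ with this r. Then: (i) f̃(0) = 0; (ii) if r ∈ dir(z), then ∂f̃/∂θ_j (0) = 0 for every j = 1,…,d−1; and (iii) Re f̃(θ) > 0 for every θ ≠ 0 in the neighborhood of 0 on which f̃ is defined with each θ_j ∈ (−π, π). -/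
open Filter Topology

/-- The phase function
f̃(θ) = log( g(z₁e^{iθ₁},…,z_{d-1}e^{iθ_{d-1}})/z_d ) + i·Σ_j (r_j/r_d)·θ_j,
where near θ = 0 the branch of the logarithm equal to 0 at θ = 0 is the principal
branch (since g(ẑ)/z_d = 1). -/
noncomputable def phaseFun {n : ℕ} (g : (Fin n → ℂ) → ℂ) (z : Fin (n + 1) → ℂ)
    (r : Fin (n + 1) → ℝ) (θ : Fin n → ℝ) : ℂ :=
  Complex.log (g (fun j => z j.castSucc * Complex.exp (Complex.I * θ j)) / z (Fin.last n))
    + Complex.I * ∑ j, ((r j.castSucc : ℂ) / (r (Fin.last n) : ℂ)) * θ j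

/-- at a strictly minimal pole, the phase f̃ vanishes at 0, is stationary
at 0 when r ∈ dir(z), and has strictly positive real part away from 0 (Lemma 4.2 of
Pemantle–Wilson, "Asymptotics of multivariate sequences I"). The number of variables
is d = n+1. -/
theorem statement5
    (n : ℕ) (H : (Fin (n + 1) → ℂ) → ℂ) (z : Fin (n + 1) → ℂ) (hz : ∀ j, z j ≠ 0)
    -- H is analytic on a neighborhood of the closed polydisk D(z)
    (hHanal : ∀ w : Fin (n + 1) → ℂ, (∀ j, ‖w j‖ ≤ ‖z j‖) →
      AnalyticAt ℂ H w)
    (hz0 : H z = 0) (hHd : pdj H z (Fin.last n) ≠ 0)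
    -- strict minimality: z is the only zero of H in D(z)
    (hmin : ∀ w : Fin (n + 1) → ℂ, (∀ j, ‖w j‖ ≤ ‖z j‖) →
      H w = 0 → w = z)
    -- g is the local parametrization of the zero set of H near z
    (g : (Fin n → ℂ) → ℂ)
    (hganal : AnalyticAt ℂ g (fun j => z j.castSucc))
    (hgval : g (fun j => z j.castSucc) = z (Fin.last n))
    (U : Set (Fin n → ℂ)) (hU : U ∈ 𝓝 (fun j => z j.castSucc))
    (hgzero : ∀ wh ∈ U, H (Fin.snoc wh (g wh)) = 0)
    -- r ∈ ℝ^d with r_d ≠ 0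
    (r : Fin (n + 1) → ℝ) (hrd : r (Fin.last n) ≠ 0) :
    -- (i) f̃(0) = 0
    phaseFun g z r 0 = 0 ∧
    -- (ii) if r ∈ dir(z) then ∇f̃(0) = 0
    ((∃ c : ℂ, c ≠ 0 ∧ ∀ j, ((r j : ℝ) : ℂ) = c * z j * pdj H z j) →
      HasFDerivAt (phaseFun g z r) (0 : (Fin n → ℝ) →L[ℝ] ℂ) 0) ∧
    -- (iii) Re f̃(θ) > 0 for θ ≠ 0 in the domain of definition with θ_j ∈ (−π, π)
    (∀ θ : Fin n → ℝ, θ ≠ 0 → (∀ j, θ j ∈ Set.Ioo (-Real.pi) Real.pi) →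
      (fun j => z j.castSucc * Complex.exp (Complex.I * θ j)) ∈ U →
      0 < (phaseFun g z r θ).re) := by
  set zh : Fin n → ℂ := fun j => z j.castSucc with hzh
  set zd : ℂ := z (Fin.last n) with hzd
  have hzdne : zd ≠ 0 := hz _
  refine ⟨?_, ?_, ?_⟩
  · -- part (i)
    have h1 : (fun j => z j.castSucc * Complex.exp (Complex.I * ((0 : Fin n → ℝ) j : ℝ))) = zh := by
      funext j; simp [hzh]
    unfold phaseFun
    rw [h1, hgval]
    simp [div_self hzdne, hzd, hz]
  · -- part (ii)
    rintro ⟨c, hc, hrc⟩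
    classical
    -- abbreviations
    set G : (Fin n → ℂ) →L[ℂ] ℂ := fderiv ℂ g zh with hG
    have hgd : DifferentiableAt ℂ g zh := hganal.differentiableAt
    have hg' : HasFDerivAt g G zh := hgd.hasFDerivAt
    -- Step 1: implicit differentiation, G (Pi.single j 1) = - pdj H z j.castSucc / pdj H z last
    have hGj : ∀ j : Fin n, G (Pi.single j 1)
        = - pdj H z j.castSucc / pdj H z (Fin.last n) := by
      have hHz : AnalyticAt ℂ H z := hHanal z fun j => le_refl _
      have hHz' : HasFDerivAt H (fderiv ℂ H z) z := hHz.differentiableAt.hasFDerivAt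
      set Φ' : (Fin n → ℂ) →L[ℂ] (Fin (n + 1) → ℂ) :=
        ContinuousLinearMap.pi
          (fun i => Fin.lastCases G (fun j => ContinuousLinearMap.proj j) i) with hΦ'
      have hΦz : (Fin.snoc zh (g zh) : Fin (n+1) → ℂ) = z := by
        rw [hgval]
        exact Fin.snoc_init_self z
      have hΦ : HasFDerivAt (fun wh => (Fin.snoc wh (g wh) : Fin (n+1) → ℂ)) Φ' zh := by
        refine hasFDerivAt_pi'.2 fun i => ?_
        rw [hΦ', ContinuousLinearMap.proj_pi]
        induction i using Fin.lastCases with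
        | last =>
          simp only [Fin.snoc_last, Fin.lastCases_last]
          exact hg'
        | cast j =>
          simp only [Fin.snoc_castSucc, Fin.lastCases_castSucc]
          exact (ContinuousLinearMap.proj (R := ℂ) (φ := fun _ : Fin n => ℂ) j).hasFDerivAt
      have hHatΦ : HasFDerivAt H (fderiv ℂ H z) (Fin.snoc zh (g zh) : Fin (n+1) → ℂ) := by
        rw [hΦz]; exact hHz'
      have hF : HasFDerivAt (fun wh => H (Fin.snoc wh (g wh)))
          ((fderiv ℂ H z).comp Φ') zh := hHatΦ.comp zh hΦ
      have hF0 : (fun wh => H (Fin.snoc wh (g wh))) =ᶠ[𝓝 zh] (fun _ => (0:ℂ)) :=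
        Filter.eventuallyEq_of_mem hU hgzero
      have hcomp0 : (fderiv ℂ H z).comp Φ' = 0 := by
        have h1 := hF.fderiv
        have h2 : fderiv ℂ (fun wh => H (Fin.snoc wh (g wh))) zh
            = fderiv ℂ (fun _ : Fin n → ℂ => (0:ℂ)) zh := hF0.fderiv_eq
        rw [fderiv_const_apply] at h2
        rw [← h1, h2]
      intro j
      have happ : ((fderiv ℂ H z).comp Φ') (Pi.single j 1) = 0 := by
        rw [hcomp0]; rfl
      have hΦs : Φ' (Pi.single j 1)
          = (Pi.single j.castSucc 1 : Fin (n+1) → ℂ)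
          + G (Pi.single j 1) • (Pi.single (Fin.last n) (1:ℂ) : Fin (n+1) → ℂ) := by
        funext i
        induction i using Fin.lastCases with
        | last =>
          simp [hΦ', ContinuousLinearMap.pi_apply, Pi.single_apply,
            (Fin.castSucc_lt_last j).ne']
        | cast k =>
          simp [hΦ', ContinuousLinearMap.pi_apply, Pi.single_apply,
            Fin.castSucc_inj, (Fin.castSucc_lt_last k).ne]
      rw [ContinuousLinearMap.comp_apply, hΦs, map_add, map_smul] at happ
      have happ' : pdj H z j.castSucc + G (Pi.single j 1) * pdj H z (Fin.last n) = 0 := by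
        simpa [pdj, smul_eq_mul] using happ
      field_simp
      linear_combination happ'
    -- Step 2: compute the derivative of phaseFun at 0
    have hcd : (r (Fin.last n) : ℂ) ≠ 0 := by exact_mod_cast hrd
    set P : Fin n → ((Fin n → ℝ) →L[ℝ] ℂ) :=
      fun j => Complex.ofRealCLM.comp (ContinuousLinearMap.proj j) with hP
    set E : (Fin n → ℝ) → (Fin n → ℂ) :=
      fun θ => fun j => z j.castSucc * Complex.exp (Complex.I * θ j) with hE
    set E' : (Fin n → ℝ) →L[ℝ] (Fin n → ℂ) :=
      ContinuousLinearMap.pi (fun j => (z j.castSucc * Complex.I) • P j) with hE'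
    have hEd : HasFDerivAt E E' 0 := by
      refine hasFDerivAt_pi'.2 fun j => ?_
      rw [hE', ContinuousLinearMap.proj_pi]
      have hin : HasFDerivAt (fun θ : Fin n → ℝ => ((θ j : ℝ) : ℂ)) (P j) 0 := (P j).hasFDerivAt
      have h1 : HasDerivAt (fun t : ℂ => Complex.I * t) Complex.I 0 := by
        simpa using (hasDerivAt_id (0:ℂ)).const_mul Complex.I
      have h2 := h1.cexp
      have h3 := h2.const_mul (z j.castSucc)
      have h4 : HasDerivAt (fun t : ℂ => z j.castSucc * Complex.exp (Complex.I * t))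
          (z j.castSucc * Complex.I) (((0 : Fin n → ℝ) j : ℝ) : ℂ) := by
        simpa using h3
      exact HasDerivAt.comp_hasFDerivAt
        (f := fun θ : Fin n → ℝ => ((θ j : ℝ) : ℂ)) 0 h4 hin
    have hE0 : E 0 = zh := by funext j; simp [hE, hzh]
    have hgR : HasFDerivAt g (G.restrictScalars ℝ) (E 0) := by
      rw [hE0]; exact hg'.restrictScalars ℝ
    have hf : HasFDerivAt (fun θ => g (E θ)) ((G.restrictScalars ℝ).comp E') 0 :=
      hgR.comp 0 hEd
    have hgE0 : g (E 0) = zd := by rw [hE0, hgval]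
    have hdiv : HasDerivAt (fun t : ℂ => t / zd) zd⁻¹ zd := by
      simpa [one_div] using (hasDerivAt_id zd).div_const zd
    have hlog1 : HasDerivAt Complex.log ((zd / zd)⁻¹) (zd / zd) :=
      Complex.hasDerivAt_log (by rw [div_self hzdne]; exact Complex.one_mem_slitPlane)
    have hlogd : HasDerivAt (fun t : ℂ => Complex.log (t / zd)) zd⁻¹ (g (E 0)) := by
      rw [hgE0]
      have := HasDerivAt.comp (h := fun t : ℂ => t / zd) (h₂ := Complex.log) zd hlog1 hdiv
      simpa [Function.comp_def, div_self hzdne] using this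
    have hterm1 : HasFDerivAt (fun θ : Fin n → ℝ => Complex.log (g (E θ) / zd))
        (zd⁻¹ • ((G.restrictScalars ℝ).comp E')) 0 :=
      HasDerivAt.comp_hasFDerivAt (f := fun θ : Fin n → ℝ => g (E θ)) 0 hlogd hf
    set cc : Fin n → ℂ := fun j => (r j.castSucc : ℂ) / (r (Fin.last n) : ℂ) with hcc
    set B : (Fin n → ℝ) →L[ℝ] ℂ := ∑ j, (Complex.I * cc j) • P j with hB
    have hterm2 : HasFDerivAt
        (fun θ : Fin n → ℝ => Complex.I * ∑ j, cc j * (θ j : ℂ)) B 0 := by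
      have hfun : (fun θ : Fin n → ℝ => Complex.I * ∑ j, cc j * (θ j : ℂ))
          = fun θ => B θ := by
        funext θ
        rw [Finset.mul_sum]
        simp [hB, hP, ContinuousLinearMap.sum_apply, mul_assoc]
      rw [hfun]
      exact B.hasFDerivAt
    have htot := hterm1.add hterm2
    -- the derivative vanishes
    have hrlast : (r (Fin.last n) : ℂ) = c * zd * pdj H z (Fin.last n) := by
      simpa [hzd] using hrc (Fin.last n)
    have hzero : (zd⁻¹ • ((G.restrictScalars ℝ).comp E')) + B = 0 := by
      ext v
      have h1 : E' v = ∑ i, ((z i.castSucc * Complex.I) * (v i : ℂ))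
          • (Pi.single i 1 : Fin n → ℂ) := by
        funext k
        simp [hE', hP, ContinuousLinearMap.pi_apply, Finset.sum_apply,
          Pi.single_apply, smul_eq_mul]
      have hEv : G (E' v) = ∑ i, ((z i.castSucc * Complex.I) * (v i : ℂ)) * G (Pi.single i 1) := by
        rw [h1, map_sum]
        simp [smul_eq_mul]
      simp only [ContinuousLinearMap.add_apply, ContinuousLinearMap.smul_apply,
        ContinuousLinearMap.coe_comp', Function.comp_apply,
        ContinuousLinearMap.coe_restrictScalars', ContinuousLinearMap.zero_apply,
        ContinuousLinearMap.sum_apply, hB]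
      rw [hEv, smul_eq_mul, Finset.mul_sum, ← Finset.sum_add_distrib]
      refine Finset.sum_eq_zero fun i _ => ?_
      rw [hGj i]
      have hri : (r i.castSucc : ℂ) = c * z i.castSucc * pdj H z i.castSucc := hrc i.castSucc
      simp only [ContinuousLinearMap.smul_apply, hP, ContinuousLinearMap.coe_comp',
        Function.comp_apply, Complex.ofRealCLM_apply, ContinuousLinearMap.proj_apply,
        smul_eq_mul, hcc, hri, hrlast]
      field_simp
      ring
    rw [hzero] at htot
    exact htot
  · -- part (iii)
    intro θ hθ hθint hθU
    set w : Fin n → ℂ := fun j => z j.castSucc * Complex.exp (Complex.I * θ j) with hw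
    -- |g w| > |zd|
    have habs : ‖zd‖ < ‖g w‖ := by
      by_contra hle
      push_neg at hle
      have hball : ∀ k, ‖(Fin.snoc w (g w) : Fin (n+1) → ℂ) k‖ ≤ ‖z k‖ := by
        intro k
        induction k using Fin.lastCases with
        | last => simpa [Fin.snoc_last] using hle
        | cast j =>
          rw [Fin.snoc_castSucc]
          have : ‖Complex.exp (Complex.I * θ j)‖ = 1 := by
            rw [Complex.norm_exp]; simp
          simp [hw, map_mul, this]
      have heq : (Fin.snoc w (g w) : Fin (n+1) → ℂ) = z := hmin _ hball (hgzero w hθU)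
      -- each θ j must be 0
      have hθ0 : θ = 0 := by
        funext j
        have h1 : w j = z j.castSucc := by
          have := congrFun heq j.castSucc
          rwa [Fin.snoc_castSucc] at this
        have h2 : Complex.exp (Complex.I * θ j) = 1 := by
          have hzj := hz j.castSucc
          have h1' : z j.castSucc * Complex.exp (Complex.I * θ j) = z j.castSucc * 1 := by
            rw [mul_one]; exact h1
          exact mul_left_cancel₀ hzj h1'
        rw [Complex.exp_eq_one_iff] at h2
        obtain ⟨k, hk⟩ := h2
        have hθk : (θ j : ℂ) = (k : ℂ) * (2 * Real.pi) := by
          have hIne : (Complex.I : ℂ) ≠ 0 := Complex.I_ne_zero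
          have : Complex.I * (θ j : ℂ) = Complex.I * ((k : ℂ) * (2 * Real.pi)) := by
            rw [hk]; ring
          exact mul_left_cancel₀ hIne this
        have hθkr : (θ j : ℝ) = (k : ℝ) * (2 * Real.pi) := by
          exact_mod_cast hθk
        have hπ := Real.pi_pos
        have hmem := hθint j
        rcases Set.mem_Ioo.mp hmem with ⟨hlo, hhi⟩
        have hk0 : k = 0 := by
          by_contra hkne
          have h1k : (1 : ℝ) ≤ |(k : ℝ)| := by
            have : (1 : ℤ) ≤ |k| := Int.one_le_abs hkne
            exact_mod_cast this
          have : |θ j| = |(k : ℝ)| * (2 * Real.pi) := by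
            rw [hθkr, abs_mul, abs_of_pos (by positivity : (0:ℝ) < 2 * Real.pi)]
          have habs' : |θ j| < Real.pi := abs_lt.mpr ⟨hlo, hhi⟩
          nlinarith
        simp [hk0] at hθkr
        simpa using hθkr
      exact hθ hθ0
    -- now compute the real part
    unfold phaseFun
    rw [Complex.add_re]
    have hsum : (Complex.I * ∑ j, ((r j.castSucc : ℂ) / (r (Fin.last n) : ℂ)) * (θ j : ℂ)).re
        = 0 := by
      have : (∑ j, ((r j.castSucc : ℂ) / (r (Fin.last n) : ℂ)) * (θ j : ℂ))
          = ((∑ j, (r j.castSucc / r (Fin.last n)) * θ j : ℝ) : ℂ) := by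
        push_cast; ring
      rw [this]
      simp
    rw [hsum, add_zero, Complex.log_re]
    apply Real.log_pos
    rw [norm_div]
    rw [lt_div_iff₀ (norm_pos_iff.mpr hzdne)]
    simpa using habs
end

section
/- Let G, H : ℂ² → ℂ be entire with H(0,0) ≠ 0, let a_{r,s} be the power-series coefficients of F = G/H at the origin, and suppose every a_{r,s} is a nonnegative real number. Let u, v > 0 be such that Σ_{r,s} a_{r,s} u'^r v'^s converges for all 0 < u' < u and 0 < v' < v, while Σ_{r,s} a_{r,s} u^r v^s = ∞. Then S(u',v') := Σ_{r,s} a_{r,s} u'^r v'^s tends to +∞ as (u',v') → (u,v) with 0 < u' < u and 0 < v' < v, and H(u,v) = 0. -/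
open Filter Topology

/-- for a quotient of entire functions with nonnegative power-series
coefficients, the sum blows up at a boundary point of the domain of convergence,
which must be a zero of the denominator (part of the proof of Theorem 6.3 of
Pemantle–Wilson, "Asymptotics of multivariate sequences I"). -/
theorem statement13
    (G H : ℂ × ℂ → ℂ) (hG : Differentiable ℂ G) (hH : Differentiable ℂ H)
    (hH0 : H 0 ≠ 0)
    (a : ℕ → ℕ → ℝ) (ha : ∀ r s, 0 ≤ a r s)
    (hexp : ∀ᶠ p : ℂ × ℂ in 𝓝 0,
      HasSum (fun rs : ℕ × ℕ => (a rs.1 rs.2 : ℂ) * p.1 ^ rs.1 * p.2 ^ rs.2) (G p / H p))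
    (u v : ℝ) (hu : 0 < u) (hv : 0 < v)
    -- the series converges at all (u',v') with 0 < u' < u and 0 < v' < v
    (hconv : ∀ u' v' : ℝ, 0 < u' → u' < u → 0 < v' → v' < v →
      Summable fun rs : ℕ × ℕ => a rs.1 rs.2 * u' ^ rs.1 * v' ^ rs.2)
    -- while the series diverges at (u,v)
    (hdiv : ¬ Summable fun rs : ℕ × ℕ => a rs.1 rs.2 * u ^ rs.1 * v ^ rs.2) :
    Tendsto (fun p : ℝ × ℝ => ∑' rs : ℕ × ℕ, a rs.1 rs.2 * p.1 ^ rs.1 * p.2 ^ rs.2)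
      (𝓝[Set.Ioo 0 u ×ˢ Set.Ioo 0 v] (u, v)) atTop ∧
    H ((u : ℂ), (v : ℂ)) = 0 := by
  set S : ℝ × ℝ → ℝ := fun p => ∑' rs : ℕ × ℕ, a rs.1 rs.2 * p.1 ^ rs.1 * p.2 ^ rs.2 with hS
  set Ω : Set (ℝ × ℝ) := Set.Ioo 0 u ×ˢ Set.Ioo 0 v with hΩ
  -- Part 1: blow-up
  have part1 : Tendsto S (𝓝[Ω] (u, v)) atTop := by
    rw [tendsto_atTop]
    intro M
    obtain ⟨T, hT⟩ : ∃ T : Finset (ℕ × ℕ),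
        M < ∑ rs ∈ T, a rs.1 rs.2 * u ^ rs.1 * v ^ rs.2 := by
      by_contra h
      push_neg at h
      exact hdiv (summable_of_sum_le (fun rs => mul_nonneg (mul_nonneg (ha _ _) (pow_nonneg hu.le _)) (pow_nonneg hv.le _)) h)
    have hgcont : Continuous fun p : ℝ × ℝ => ∑ rs ∈ T, a rs.1 rs.2 * p.1 ^ rs.1 * p.2 ^ rs.2 := by
      refine continuous_finset_sum _ fun rs _ => ?_
      exact (continuous_const.mul (continuous_fst.pow _)).mul (continuous_snd.pow _)
    have hev : ∀ᶠ p : ℝ × ℝ in 𝓝 (u, v),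
        M < ∑ rs ∈ T, a rs.1 rs.2 * p.1 ^ rs.1 * p.2 ^ rs.2 :=
      hgcont.continuousAt.eventually (eventually_gt_nhds hT)
    filter_upwards [nhdsWithin_le_nhds hev, self_mem_nhdsWithin] with p hp hpΩ
    have hx := hpΩ.1
    have hy := hpΩ.2
    have hsum := hconv p.1 p.2 hx.1 hx.2 hy.1 hy.2
    have hle : ∑ rs ∈ T, a rs.1 rs.2 * p.1 ^ rs.1 * p.2 ^ rs.2 ≤ S p := by
      exact Summable.sum_le_tsum T (fun rs _ => mul_nonneg (mul_nonneg (ha _ _)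
        (pow_nonneg hx.1.le _)) (pow_nonneg hy.1.le _)) hsum
    linarith
  -- Key identity: S(x,y) * H(x,y) = G(x,y) on the open box
  have key : ∀ x y : ℝ, 0 < x → x < u → 0 < y → y < v →
      ((S (x, y) : ℝ) : ℂ) * H ((x : ℂ), (y : ℂ)) = G ((x : ℂ), (y : ℂ)) := by
    intro x y hx hxu hy hyv
    obtain ⟨τ, hτ1, hτx, hτy⟩ : ∃ τ : ℝ, 1 < τ ∧ τ * x < u ∧ τ * y < v := by
      refine ⟨min ((1 + u / x) / 2) ((1 + v / y) / 2), ?_, ?_, ?_⟩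
      · have h1 : 1 < u / x := (one_lt_div hx).2 hxu
        have h2 : 1 < v / y := (one_lt_div hy).2 hyv
        exact lt_min (by linarith) (by linarith)
      · have h1 : min ((1 + u / x) / 2) ((1 + v / y) / 2) ≤ (1 + u / x) / 2 := min_le_left _ _
        have h2 : 1 < u / x := (one_lt_div hx).2 hxu
        have : (1 + u / x) / 2 < u / x := by linarith
        calc min ((1 + u / x) / 2) ((1 + v / y) / 2) * x ≤ (1 + u / x) / 2 * x := by
              exact mul_le_mul_of_nonneg_right h1 hx.le
          _ < u / x * x := by exact mul_lt_mul_of_pos_right this hx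
          _ = u := div_mul_cancel₀ _ hx.ne'
      · have h1 : min ((1 + u / x) / 2) ((1 + v / y) / 2) ≤ (1 + v / y) / 2 := min_le_right _ _
        have h2 : 1 < v / y := (one_lt_div hy).2 hyv
        have : (1 + v / y) / 2 < v / y := by linarith
        calc min ((1 + u / x) / 2) ((1 + v / y) / 2) * y ≤ (1 + v / y) / 2 * y := by
              exact mul_le_mul_of_nonneg_right h1 hy.le
          _ < v / y * y := by exact mul_lt_mul_of_pos_right this hy
          _ = y * (v / y) * y / y := by field_simp
          _ = v := by field_simp
    have hτ0 : 0 < τ := lt_trans one_pos hτ1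
    have hsumτ : Summable fun rs : ℕ × ℕ => a rs.1 rs.2 * (τ * x) ^ rs.1 * (τ * y) ^ rs.2 :=
      hconv _ _ (by positivity) hτx (by positivity) hτy
    set Φ : ℂ → ℂ := fun t =>
      ∑' rs : ℕ × ℕ, (a rs.1 rs.2 : ℂ) * (x : ℂ) ^ rs.1 * (y : ℂ) ^ rs.2 * t ^ (rs.1 + rs.2)
      with hΦ
    have hΦdiff : DifferentiableOn ℂ Φ (Metric.ball 0 τ) := by
      refine Complex.differentiableOn_tsum_of_summable_norm hsumτ
        (fun rs => (Differentiable.differentiableOn (by fun_prop))) Metric.isOpen_ball ?_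
      intro rs w hw
      have hw' : ‖w‖ ≤ τ := by
        rw [Metric.mem_ball, dist_zero_right] at hw; exact hw.le
      have h1 : ‖(a rs.1 rs.2 : ℂ) * (x : ℂ) ^ rs.1 * (y : ℂ) ^ rs.2 * w ^ (rs.1 + rs.2)‖
          = a rs.1 rs.2 * x ^ rs.1 * y ^ rs.2 * ‖w‖ ^ (rs.1 + rs.2) := by
        simp [norm_mul, norm_pow, Complex.norm_real, abs_of_nonneg (ha _ _),
          abs_of_nonneg hx.le, abs_of_nonneg hy.le]
      rw [h1]
      have h2 : ‖w‖ ^ (rs.1 + rs.2) ≤ τ ^ (rs.1 + rs.2) :=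
        pow_le_pow_left₀ (norm_nonneg _) hw' _
      calc a rs.1 rs.2 * x ^ rs.1 * y ^ rs.2 * ‖w‖ ^ (rs.1 + rs.2)
          ≤ a rs.1 rs.2 * x ^ rs.1 * y ^ rs.2 * τ ^ (rs.1 + rs.2) := by
            have hnn : (0:ℝ) ≤ a rs.1 rs.2 * x ^ rs.1 * y ^ rs.2 :=
              mul_nonneg (mul_nonneg (ha _ _) (pow_nonneg hx.le _)) (pow_nonneg hy.le _)
            exact mul_le_mul_of_nonneg_left h2 hnn
        _ = a rs.1 rs.2 * (τ * x) ^ rs.1 * (τ * y) ^ rs.2 := by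
            rw [mul_pow, mul_pow, pow_add]; ring
    set Ψ : ℂ → ℂ := fun t => Φ t * H ((t * x : ℂ), (t * y : ℂ)) - G ((t * x : ℂ), (t * y : ℂ))
      with hΨ
    have hslice : Differentiable ℂ fun t : ℂ => ((t * x : ℂ), (t * y : ℂ)) := by fun_prop
    have hΨdiff : DifferentiableOn ℂ Ψ (Metric.ball 0 τ) := by
      apply DifferentiableOn.sub
      · exact hΦdiff.mul ((hH.comp hslice).differentiableOn)
      · exact (hG.comp hslice).differentiableOn
    have hΨan : AnalyticOnNhd ℂ Ψ (Metric.ball 0 τ) :=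
      hΨdiff.analyticOnNhd Metric.isOpen_ball
    -- Ψ vanishes near 0
    have hHne : ∀ᶠ p : ℂ × ℂ in 𝓝 0, H p ≠ 0 := hH.continuous.continuousAt.eventually_ne hH0
    have hm : Tendsto (fun t : ℂ => ((t * x : ℂ), (t * y : ℂ))) (𝓝 0) (𝓝 0) := by
      have : Continuous fun t : ℂ => ((t * x : ℂ), (t * y : ℂ)) := by fun_prop
      have h0 : ((0 : ℂ) * x, (0 : ℂ) * y) = (0 : ℂ × ℂ) := by simp
      rw [← h0]; exact this.tendsto 0
    have hΨ0 : Ψ =ᶠ[𝓝 (0 : ℂ)] 0 := by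
      filter_upwards [hm.eventually (hexp.and hHne)] with t ht
      obtain ⟨hts, htne⟩ := ht
      have heq : (fun rs : ℕ × ℕ =>
            (a rs.1 rs.2 : ℂ) * (x : ℂ) ^ rs.1 * (y : ℂ) ^ rs.2 * t ^ (rs.1 + rs.2))
          = fun rs : ℕ × ℕ => (a rs.1 rs.2 : ℂ) * (t * x) ^ rs.1 * (t * y) ^ rs.2 := by
        funext rs
        rw [pow_add, mul_pow, mul_pow]; ring
      have hΦt : Φ t = G ((t * x : ℂ), (t * y : ℂ)) / H ((t * x : ℂ), (t * y : ℂ)) := by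
        rw [hΦ]; simp only [heq]
        exact hts.tsum_eq
      show Φ t * H ((t * x : ℂ), (t * y : ℂ)) - G ((t * x : ℂ), (t * y : ℂ)) = 0
      rw [hΦt, div_mul_cancel₀ _ htne, sub_self]
    have hEq : Set.EqOn Ψ 0 (Metric.ball 0 τ) :=
      hΨan.eqOn_zero_of_preconnected_of_eventuallyEq_zero
        (convex_ball (0 : ℂ) τ).isPreconnected (Metric.mem_ball_self hτ0) hΨ0
    have h1mem : (1 : ℂ) ∈ Metric.ball (0 : ℂ) τ := by
      rw [Metric.mem_ball, dist_zero_right]; simpa using hτ1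
    have hΨ1 : Ψ 1 = 0 := hEq h1mem
    have hsumxy : Summable fun rs : ℕ × ℕ => a rs.1 rs.2 * x ^ rs.1 * y ^ rs.2 :=
      hconv x y hx hxu hy hyv
    have hΦ1 : Φ 1 = ((S (x, y) : ℝ) : ℂ) := by
      have h2 : ((S (x, y) : ℝ) : ℂ)
          = ∑' rs : ℕ × ℕ, ((a rs.1 rs.2 * x ^ rs.1 * y ^ rs.2 : ℝ) : ℂ) := by
        rw [hS]
        exact Complex.ofReal_tsum _
      rw [h2, hΦ]
      refine tsum_congr fun rs => ?_
      push_cast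
      ring
    have hΨ1' : Φ 1 * H ((1 * x : ℂ), (1 * y : ℂ)) - G ((1 * x : ℂ), (1 * y : ℂ)) = 0 := hΨ1
    simp only [one_mul] at hΨ1'
    rw [hΦ1] at hΨ1'
    linear_combination hΨ1'
  -- the within filter is nontrivial
  have hne : (𝓝[Ω] ((u : ℝ), v)).NeBot := by
    rw [← mem_closure_iff_nhdsWithin_neBot, hΩ, closure_prod_eq,
      closure_Ioo hu.ne, closure_Ioo hv.ne]
    exact ⟨⟨hu.le, le_rfl⟩, ⟨hv.le, le_rfl⟩⟩
  -- Part 2: H(u,v) = 0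
  have part2 : H ((u : ℂ), (v : ℂ)) = 0 := by
    by_contra hH0'
    have hGHcont : Tendsto (fun p : ℝ × ℝ => G ((p.1 : ℂ), (p.2 : ℂ)) / H ((p.1 : ℂ), (p.2 : ℂ)))
        (𝓝 ((u : ℝ), v)) (𝓝 (G ((u : ℂ), (v : ℂ)) / H ((u : ℂ), (v : ℂ)))) := by
      have hcoe : Continuous fun p : ℝ × ℝ => (((p.1 : ℂ), (p.2 : ℂ)) : ℂ × ℂ) := by fun_prop
      have h1 : Tendsto (fun p : ℝ × ℝ => G ((p.1 : ℂ), (p.2 : ℂ)))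
          (𝓝 ((u : ℝ), v)) (𝓝 (G ((u : ℂ), (v : ℂ)))) := ((hG.continuous.comp hcoe).tendsto _)
      have h2 : Tendsto (fun p : ℝ × ℝ => H ((p.1 : ℂ), (p.2 : ℂ)))
          (𝓝 ((u : ℝ), v)) (𝓝 (H ((u : ℂ), (v : ℂ)))) := ((hH.continuous.comp hcoe).tendsto _)
      exact h1.div h2 hH0'
    have hHne' : ∀ᶠ p : ℝ × ℝ in 𝓝 ((u : ℝ), v), H ((p.1 : ℂ), (p.2 : ℂ)) ≠ 0 := by
      have hcoe : Continuous fun p : ℝ × ℝ => (((p.1 : ℂ), (p.2 : ℂ)) : ℂ × ℂ) := by fun_prop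
      exact (hH.continuous.comp hcoe).continuousAt.eventually_ne hH0'
    have hSC : Tendsto (fun p : ℝ × ℝ => ((S p : ℝ) : ℂ)) (𝓝[Ω] ((u : ℝ), v))
        (𝓝 (G ((u : ℂ), (v : ℂ)) / H ((u : ℂ), (v : ℂ)))) := by
      refine Tendsto.congr' ?_ (hGHcont.mono_left nhdsWithin_le_nhds)
      filter_upwards [nhdsWithin_le_nhds hHne', self_mem_nhdsWithin] with p hp hpΩ
      have hk := key p.1 p.2 hpΩ.1.1 hpΩ.1.2 hpΩ.2.1 hpΩ.2.2
      field_simp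
      linear_combination -hk
    have hSre : Tendsto S (𝓝[Ω] ((u : ℝ), v))
        (𝓝 ((G ((u : ℂ), (v : ℂ)) / H ((u : ℂ), (v : ℂ))).re)) := by
      have := (Complex.continuous_re.tendsto _).comp hSC
      simpa [Function.comp_def] using this
    exact not_tendsto_atTop_of_tendsto_nhds hSre part1
  exact ⟨part1, part2⟩
end

section
/- The central Delannoy numbers satisfy D(n,n)·(√2 − 1)^{2n}·√n → 2^{−1/4} / ( (2−√2)·√(2π) ) as n → ∞; equivalently, D(n,n) is asymptotic to (3+2√2)^n · n^{−1/2} · 2^{−1/4}/((2−√2)√(2π)). -/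
open Filter Topology Finset Real MeasureTheory intervalIntegral

/-- The Delannoy numbers: D(0,0) = 1, with D(r,s) = D(r−1,s) + D(r,s−1) + D(r−1,s−1)
and D(r,s) = 0 when r < 0 or s < 0. -/
def delannoy : ℕ → ℕ → ℕ
  | 0, 0 => 1
  | 0, s + 1 => delannoy 0 s
  | r + 1, 0 => delannoy r 0
  | r + 1, s + 1 => delannoy r (s + 1) + delannoy (r + 1) s + delannoy r s

noncomputable def dsum (r s : ℕ) : ℝ :=
  ∑ k ∈ Finset.range (r + 1), (r.choose k : ℝ) * (s.choose k : ℝ) * 2 ^ k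

lemma dsum_ext (r s N : ℕ) (h : r + 1 ≤ N) :
    ∑ k ∈ Finset.range N, (r.choose k : ℝ) * (s.choose k : ℝ) * 2 ^ k = dsum r s := by
  rw [dsum, eq_comm]
  apply Finset.sum_subset (Finset.range_subset_range.2 h)
  intro k _ hk
  simp only [Finset.mem_range, not_lt] at hk
  rw [Nat.choose_eq_zero_of_lt (by omega)]
  simp

lemma dsum_zero_left (s : ℕ) : dsum 0 s = 1 := by simp [dsum]

lemma dsum_zero_right (r : ℕ) : dsum r 0 = 1 := by
  rw [dsum]
  rw [Finset.sum_eq_single 0]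
  · simp
  · intro k _ hk
    rw [Nat.choose_eq_zero_of_lt (by omega : (0:ℕ) < k)]
    simp
  · simp

lemma dsum_rec (r s : ℕ) :
    dsum (r + 1) (s + 1) = dsum r (s + 1) + dsum (r + 1) s + dsum r s := by
  have e1 := dsum_ext (r+1) (s+1) (r+2) (by omega)
  have e2 := dsum_ext r (s+1) (r+2) (by omega)
  have e3 := dsum_ext (r+1) s (r+2) (by omega)
  have e4 := dsum_ext r s (r+2) (by omega)
  rw [← e1, ← e2, ← e3, ← e4]
  have key : ∑ k ∈ Finset.range (r+2),
      (((r+1).choose k : ℝ) * ((s+1).choose k) * 2^k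
        - (r.choose k : ℝ) * ((s+1).choose k) * 2^k
        - ((r+1).choose k : ℝ) * (s.choose k) * 2^k
        - (r.choose k : ℝ) * (s.choose k) * 2^k) = 0 := by
    rw [Finset.sum_range_succ']
    have tel : ∀ j ∈ Finset.range (r+1),
        (((r+1).choose (j+1) : ℝ) * ((s+1).choose (j+1)) * 2^(j+1)
        - (r.choose (j+1) : ℝ) * ((s+1).choose (j+1)) * 2^(j+1)
        - ((r+1).choose (j+1) : ℝ) * (s.choose (j+1)) * 2^(j+1)
        - (r.choose (j+1) : ℝ) * (s.choose (j+1)) * 2^(j+1))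
        = (fun j => 2^(j+1) * (r.choose j : ℝ) * (s.choose j)) j
          - (fun j => 2^(j+1) * (r.choose j : ℝ) * (s.choose j)) (j+1) := by
      intro j _
      simp only [Nat.choose_succ_succ r j, Nat.choose_succ_succ s j]
      push_cast
      ring
    rw [Finset.sum_congr rfl tel, Finset.sum_range_sub']
    rw [Nat.choose_eq_zero_of_lt (by omega : r < r + 1)]
    simp
    norm_num
  have : (∑ k ∈ Finset.range (r+2), ((r+1).choose k : ℝ) * ((s+1).choose k) * 2^k)
      - (∑ k ∈ Finset.range (r+2), (r.choose k : ℝ) * ((s+1).choose k) * 2^k)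
      - (∑ k ∈ Finset.range (r+2), ((r+1).choose k : ℝ) * (s.choose k) * 2^k)
      - (∑ k ∈ Finset.range (r+2), (r.choose k : ℝ) * (s.choose k) * 2^k) = 0 := by
    rw [← Finset.sum_sub_distrib, ← Finset.sum_sub_distrib, ← Finset.sum_sub_distrib]
    exact key
  linarith
lemma delannoy_eq_dsum (r s : ℕ) : (delannoy r s : ℝ) = dsum r s := by
  induction r, s using delannoy.induct with
  | case1 => simp [delannoy, dsum]
  | case2 s ih => rw [delannoy]; rw [ih, dsum_zero_left, dsum_zero_left]
  | case3 r ih => rw [delannoy]; rw [ih, dsum_zero_right, dsum_zero_right]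
  | case4 r s ih1 ih2 ih3 =>
      rw [delannoy]; push_cast; rw [ih1, ih2, ih3, dsum_rec]

noncomputable def s2 : ℝ := Real.sqrt 2

lemma s2_sq : s2 ^ 2 = 2 := Real.sq_sqrt (by norm_num)

lemma s2C_sq : ((s2 : ℂ)) ^ 2 = 2 := by exact_mod_cast s2_sq

-- factorization over ℂ
lemma factor (θ : ℝ) :
    ((3 + 2 * s2 * Real.cos θ : ℝ) : ℂ)
      = (1 + (s2:ℂ) * Complex.exp (θ * Complex.I))
        * (1 + (s2:ℂ) * Complex.exp (-(θ * Complex.I))) := by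
  have h1 : Complex.exp ((θ:ℂ) * Complex.I) = Complex.cos θ + Complex.sin θ * Complex.I :=
    Complex.exp_mul_I _
  have h2 : Complex.exp (-((θ:ℂ) * Complex.I)) = Complex.cos θ - Complex.sin θ * Complex.I := by
    rw [show -((θ:ℂ) * Complex.I) = (-θ : ℂ) * Complex.I by ring,
      Complex.exp_mul_I, Complex.cos_neg, Complex.sin_neg]
    ring
  have hre : ((3 + 2 * s2 * Real.cos θ : ℝ) : ℂ) = 3 + 2 * (s2:ℂ) * Complex.cos θ := by
    push_cast [Complex.ofReal_cos]
    ring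
  rw [hre, h1, h2]
  linear_combination (-(Complex.cos (θ:ℂ)^2 - Complex.sin (θ:ℂ)^2 * Complex.I^2)) * s2C_sq
    + (2 * Complex.sin (θ:ℂ)^2) * Complex.I_sq
    + (-2) * (Complex.sin_sq_add_cos_sq (θ:ℂ))

open intervalIntegral in
lemma integral_orth (k l : ℕ) :
    (∫ θ : ℝ in (-π)..π, Complex.exp ((((k:ℂ) - l) * Complex.I) * θ))
      = if k = l then (2 * π : ℂ) else 0 := by
  rcases eq_or_ne k l with h | h
  · subst h
    simp [two_mul]
  · rw [if_neg h]
    have hc : ((k:ℂ) - l) * Complex.I ≠ 0 := by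
      simp only [ne_eq, mul_eq_zero, Complex.I_ne_zero, or_false, sub_eq_zero]
      exact_mod_cast fun hh => h (by exact_mod_cast hh)
    rw [integral_exp_mul_complex hc]
    have key : ∀ m : ℤ, Complex.exp ((m : ℂ) * (π * Complex.I)) = (-1 : ℂ) ^ m := by
      intro m
      rw [Complex.exp_int_mul, Complex.exp_pi_mul_I]
    have e1 : ((k:ℂ) - l) * Complex.I * (π:ℝ) = (((k:ℤ) - l : ℤ) : ℂ) * (π * Complex.I) := by
      push_cast; ring
    have e2 : ((k:ℂ) - l) * Complex.I * ((-π:ℝ)) = ((-(((k:ℤ) - l)) : ℤ) : ℂ) * (π * Complex.I) := by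
      push_cast; ring
    rw [e1, e2, key, key, zpow_neg]
    have : ((-1 : ℂ) ^ ((k:ℤ) - l))⁻¹ = (-1 : ℂ) ^ ((k:ℤ) - l) := by
      rw [← inv_zpow]
      norm_num
    rw [this, sub_self, zero_div]

open intervalIntegral in
lemma integral_complex (n : ℕ) :
    (∫ θ : ℝ in (-π)..π, ((3 + 2 * s2 * Real.cos θ : ℝ) : ℂ) ^ n)
      = 2 * π * ∑ k ∈ Finset.range (n+1), ((n.choose k : ℂ))^2 * 2 ^ k := by
  have expand : ∀ θ : ℝ, ((3 + 2 * s2 * Real.cos θ : ℝ) : ℂ) ^ n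
      = ∑ k ∈ Finset.range (n+1), ∑ l ∈ Finset.range (n+1),
          (((n.choose k : ℂ) * (s2:ℂ)^k) * ((n.choose l : ℂ) * (s2:ℂ)^l))
            * Complex.exp ((((k:ℂ) - l) * Complex.I) * θ) := by
    intro θ
    rw [factor, mul_pow]
    rw [show (1 + (s2:ℂ) * Complex.exp (θ * Complex.I))
        = ((s2:ℂ) * Complex.exp (θ * Complex.I) + 1) by ring]
    rw [show (1 + (s2:ℂ) * Complex.exp (-(θ * Complex.I)))
        = ((s2:ℂ) * Complex.exp (-(θ * Complex.I)) + 1) by ring]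
    rw [add_pow, add_pow, Finset.sum_mul_sum]
    refine Finset.sum_congr rfl fun k _ => Finset.sum_congr rfl fun l _ => ?_
    simp only [one_pow, mul_one, mul_pow]
    rw [← Complex.exp_nat_mul, ← Complex.exp_nat_mul]
    have hexp : Complex.exp ((k:ℂ) * (θ * Complex.I)) * Complex.exp ((l:ℂ) * -(θ * Complex.I))
        = Complex.exp ((((k:ℂ) - l) * Complex.I) * θ) := by
      rw [← Complex.exp_add]; congr 1; ring
    linear_combination ((s2:ℂ) ^ k * (n.choose k : ℂ) * ((s2:ℂ) ^ l * (n.choose l : ℂ))) * hexp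
  simp only [expand]
  rw [intervalIntegral.integral_finset_sum]
  · have inner : ∀ k ∈ Finset.range (n+1),
        (∫ θ : ℝ in (-π)..π, ∑ l ∈ Finset.range (n+1),
          (((n.choose k : ℂ) * (s2:ℂ)^k) * ((n.choose l : ℂ) * (s2:ℂ)^l))
            * Complex.exp ((((k:ℂ) - l) * Complex.I) * θ))
        = ((n.choose k : ℂ))^2 * 2^k * (2 * π) := by
      intro k hk
      rw [intervalIntegral.integral_finset_sum]
      · have eachl : ∀ l ∈ Finset.range (n+1),
            (∫ θ : ℝ in (-π)..π,
              (((n.choose k : ℂ) * (s2:ℂ)^k) * ((n.choose l : ℂ) * (s2:ℂ)^l))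
                * Complex.exp ((((k:ℂ) - l) * Complex.I) * θ))
            = (((n.choose k : ℂ) * (s2:ℂ)^k) * ((n.choose l : ℂ) * (s2:ℂ)^l))
                * (if k = l then (2*π:ℂ) else 0) := by
          intro l _
          rw [intervalIntegral.integral_const_mul, integral_orth]
        rw [Finset.sum_congr rfl eachl, Finset.sum_eq_single k]
        · rw [if_pos rfl]
          have hS : ((s2:ℂ))^k * ((s2:ℂ))^k = 2^k := by
            rw [← pow_add, ← two_mul, pow_mul, s2C_sq]
          linear_combination ((n.choose k : ℂ))^2 * (2*(π:ℂ)) * hS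
        · intro l _ hl
          rw [if_neg fun hh => hl hh.symm, mul_zero]
        · intro hkk
          exact absurd hk hkk
      · intro l _
        apply Continuous.intervalIntegrable
        fun_prop
    rw [Finset.sum_congr rfl inner, ← Finset.sum_mul]
    ring
  · intro k _
    apply Continuous.intervalIntegrable
    apply continuous_finset_sum
    intro l _
    fun_prop

lemma integral_real (n : ℕ) :
    (∫ θ : ℝ in (-π)..π, (3 + 2 * s2 * Real.cos θ) ^ n)
      = 2 * π * ∑ k ∈ Finset.range (n+1), ((n.choose k : ℝ))^2 * 2 ^ k := by
  have := integral_complex n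
  have cast1 : (∫ θ : ℝ in (-π)..π, ((3 + 2 * s2 * Real.cos θ : ℝ) : ℂ) ^ n)
      = ((∫ θ : ℝ in (-π)..π, (3 + 2 * s2 * Real.cos θ) ^ n : ℝ) : ℂ) := by
    have h := RCLike.intervalIntegral_ofReal (𝕜 := ℂ) (a := -π) (b := π)
      (μ := MeasureTheory.volume) (f := fun θ => (3 + 2 * s2 * Real.cos θ) ^ n)
    push_cast at h ⊢
    convert h using 3 with θ
    · rfl
    · exact congrArg (fun z : ℂ => (3 + 2 * (s2:ℂ) * z) ^ n) (Complex.ofReal_cos _).symm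
    · rfl
  rw [cast1] at this
  apply Complex.ofReal_injective
  rw [this]
  push_cast
  ring

noncomputable def cc : ℝ := 6 * Real.sqrt 2 - 8

lemma sqrt2_lt : Real.sqrt 2 < 1.41666 := by
  nlinarith [Real.sq_sqrt (by norm_num : (2:ℝ) ≥ 0).le, Real.sqrt_nonneg 2]

lemma sqrt2_gt : (1.414 : ℝ) < Real.sqrt 2 := by
  nlinarith [Real.sq_sqrt (by norm_num : (0:ℝ) ≤ 2), Real.sqrt_nonneg 2]

lemma cc_pos : 0 < cc := by unfold cc; nlinarith [sqrt2_gt]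
lemma cc_lt_half : 2 * cc < 1 := by unfold cc; nlinarith [sqrt2_lt]

noncomputable def G (u : ℝ) : ℝ := 1 - cc * (1 - Real.cos u)

lemma G_pos (u : ℝ) : 0 < G u := by
  have h1 : Real.cos u ≥ -1 := Real.neg_one_le_cos u
  have := cc_lt_half
  have := cc_pos
  unfold G
  nlinarith

lemma G_le_one (u : ℝ) : G u ≤ 1 := by
  have h1 : Real.cos u ≤ 1 := Real.cos_le_one u
  have := cc_pos
  unfold G
  nlinarith

lemma G_bound {u : ℝ} (hu : |u| ≤ π) : G u ≤ Real.exp (-(2 * cc / π ^ 2) * u ^ 2) := by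
  have h1 : Real.cos u ≤ 1 - 2 / π ^ 2 * u ^ 2 := Real.cos_le_one_sub_mul_cos_sq hu
  have h2 : (-(2 * cc / π ^ 2) * u ^ 2) + 1 ≤ Real.exp (-(2 * cc / π ^ 2) * u ^ 2) :=
    Real.add_one_le_exp _
  have hc := cc_pos
  have hπ : (0:ℝ) < π ^ 2 := by positivity
  have : G u ≤ 1 - cc * (2 / π ^ 2 * u ^ 2) := by
    unfold G
    nlinarith
  calc G u ≤ 1 - cc * (2 / π ^ 2 * u ^ 2) := this
    _ = (-(2 * cc / π ^ 2) * u ^ 2) + 1 := by field_simp; ring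
    _ ≤ _ := h2

noncomputable def F (n : ℕ) (t : ℝ) : ℝ :=
  Set.indicator (Set.Ioc (-(π * Real.sqrt n)) (π * Real.sqrt n))
    (fun t => (G (t / Real.sqrt n)) ^ n) t

lemma F_meas (n : ℕ) : AEStronglyMeasurable (F n) volume := by
  apply AEStronglyMeasurable.indicator _ measurableSet_Ioc
  apply Continuous.aestronglyMeasurable
  unfold G
  fun_prop

lemma F_bound (n : ℕ) (t : ℝ) : ‖F n t‖ ≤ Real.exp (-(2 * cc / π ^ 2) * t ^ 2) := by
  unfold F
  rcases Set.indicator_eq_zero_or_self _ (fun t => (G (t / Real.sqrt n)) ^ n) t with h | h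
  · rw [h]; simp [Real.exp_nonneg]
  · by_cases hmem : t ∈ Set.Ioc (-(π * Real.sqrt n)) (π * Real.sqrt n)
    swap
    · rw [Set.indicator_of_notMem hmem]; simp [Real.exp_nonneg]
    rw [Set.indicator_of_mem hmem]
    obtain ⟨h1, h2⟩ := hmem
    have hs : 0 < Real.sqrt n := by
      by_contra hs
      push_neg at hs
      have : Real.sqrt n = 0 := le_antisymm hs (Real.sqrt_nonneg _)
      rw [this] at h1 h2
      simp at h1 h2
      linarith
    have hn : n ≠ 0 := by
      intro h0
      rw [h0] at hs
      simp at hs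
    have habs : |t / Real.sqrt n| ≤ π := by
      rw [abs_div, abs_of_pos hs, div_le_iff₀ hs]
      rw [abs_le]
      constructor <;> nlinarith [Real.pi_pos]
    have hb := G_bound habs
    have hnorm : ‖(G (t / Real.sqrt n)) ^ n‖ = (G (t / Real.sqrt n)) ^ n := by
      rw [Real.norm_eq_abs, abs_of_nonneg (pow_nonneg (G_pos _).le n)]
    rw [hnorm]
    calc (G (t / Real.sqrt n)) ^ n
        ≤ (Real.exp (-(2 * cc / π ^ 2) * (t / Real.sqrt n) ^ 2)) ^ n :=
          pow_le_pow_left₀ (G_pos _).le hb n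
      _ = Real.exp ((n : ℝ) * (-(2 * cc / π ^ 2) * (t / Real.sqrt n) ^ 2)) := by
          rw [← Real.exp_nat_mul]
      _ = Real.exp (-(2 * cc / π ^ 2) * t ^ 2) := by
          congr 1
          rw [div_pow, Real.sq_sqrt (Nat.cast_nonneg n)]
          field_simp

lemma sqrtn_atTop : Tendsto (fun n : ℕ => Real.sqrt n) atTop atTop := by
  refine tendsto_atTop.2 fun b => ?_
  filter_upwards [eventually_ge_atTop (⌈b⌉₊ ^ 2)] with n hn
  have h : ((⌈b⌉₊ : ℝ)) ^ 2 ≤ (n : ℝ) := by exact_mod_cast hn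
  calc b ≤ (⌈b⌉₊ : ℝ) := Nat.le_ceil b
    _ = Real.sqrt ((⌈b⌉₊ : ℝ) ^ 2) := (Real.sqrt_sq (by positivity)).symm
    _ ≤ Real.sqrt n := Real.sqrt_le_sqrt h

lemma slope_sin : Tendsto (fun v : ℝ => Real.sin v / v) (𝓝[≠] 0) (𝓝 1) := by
  have h := hasDerivAt_iff_tendsto_slope.1 (Real.hasDerivAt_sin 0)
  rw [Real.cos_zero] at h
  refine h.congr fun v => ?_
  simp [slope_fun_def]
  ring

lemma slope_log : Tendsto (fun y : ℝ => Real.log y / (y - 1)) (𝓝[≠] 1) (𝓝 1) := by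
  have h := hasDerivAt_iff_tendsto_slope.1 (Real.hasDerivAt_log one_ne_zero)
  rw [inv_one] at h
  refine h.congr fun y => ?_
  simp [slope_fun_def]
  ring

lemma u_tendsto (t : ℝ) (a : ℝ) (ha : 0 < a) :
    Tendsto (fun n : ℕ => t / (a * Real.sqrt n)) atTop (𝓝 0) := by
  have h1 : Tendsto (fun n : ℕ => a * Real.sqrt n) atTop atTop :=
    (tendsto_const_mul_atTop_of_pos ha).2 sqrtn_atTop
  have h2 : Tendsto (fun n : ℕ => (a * Real.sqrt n)⁻¹) atTop (𝓝 0) :=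
    tendsto_inv_atTop_zero.comp h1
  have := h2.const_mul t
  simpa [div_eq_mul_inv, mul_zero] using this

lemma key_limit (t : ℝ) (ht : t ≠ 0) :
    Tendsto (fun n : ℕ => (n : ℝ) * (1 - Real.cos (t / Real.sqrt n))) atTop (𝓝 (t ^ 2 / 2)) := by
  set v : ℕ → ℝ := fun n => t / (2 * Real.sqrt n) with hv
  have hv0 : Tendsto v atTop (𝓝 0) := u_tendsto t 2 two_pos
  have hvne : ∀ᶠ n : ℕ in atTop, v n ≠ 0 := by
    filter_upwards [eventually_ge_atTop 1] with n hn
    have hs : 0 < Real.sqrt n := Real.sqrt_pos.2 (by exact_mod_cast hn)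
    simp only [hv]
    positivity
  have hvin : Tendsto v atTop (𝓝[≠] 0) :=
    tendsto_nhdsWithin_iff.2 ⟨hv0, by simpa using hvne⟩
  have hs : Tendsto (fun n => Real.sin (v n) / v n) atTop (𝓝 1) := slope_sin.comp hvin
  have main : Tendsto (fun n => t ^ 2 / 2 * (Real.sin (v n) / v n) ^ 2) atTop
      (𝓝 (t ^ 2 / 2)) := by
    have := (hs.pow 2).const_mul (t ^ 2 / 2)
    simpa using this
  refine Tendsto.congr' ?_ main
  filter_upwards [eventually_ge_atTop 1] with n hn
  have hnR : (0:ℝ) < n := by exact_mod_cast hn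
  have hsq : 0 < Real.sqrt n := Real.sqrt_pos.2 hnR
  have hu2v : t / Real.sqrt n = 2 * v n := by
    simp only [hv]
    field_simp
  have hsinsq : 1 - Real.cos (t / Real.sqrt n) = 2 * Real.sin (v n) ^ 2 := by
    rw [hu2v]
    have := Real.sin_sq_eq_half_sub (v n)
    linarith
  have hvne' : v n ≠ 0 := by
    simp only [hv]; positivity
  have hvsq : v n ^ 2 = t ^ 2 / (4 * n) := by
    simp only [hv]
    rw [div_pow, mul_pow, Real.sq_sqrt hnR.le]
    norm_num
  rw [div_pow]
  rw [hvsq]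
  rw [hsinsq]
  field_simp
  ring

lemma F_tendsto (t : ℝ) :
    Tendsto (fun n : ℕ => F n t) atTop (𝓝 (Real.exp (-(cc / 2) * t ^ 2))) := by
  have hev : ∀ᶠ n : ℕ in atTop, |t| + 1 ≤ π * Real.sqrt n :=
    ((tendsto_const_mul_atTop_of_pos Real.pi_pos).2 sqrtn_atTop).eventually_ge_atTop (|t| + 1)
  have hind : ∀ᶠ n : ℕ in atTop, (G (t / Real.sqrt n)) ^ n = F n t := by
    filter_upwards [hev] with n hn
    have hmem : t ∈ Set.Ioc (-(π * Real.sqrt n)) (π * Real.sqrt n) := by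
      constructor
      · nlinarith [neg_abs_le t, abs_nonneg t]
      · nlinarith [le_abs_self t]
    rw [F, Set.indicator_of_mem hmem]
  refine Tendsto.congr' hind ?_
  rcases eq_or_ne t 0 with rfl | ht
  · have hG0 : G 0 = 1 := by unfold G; simp
    simpa [zero_div, hG0] using (tendsto_const_nhds :
      Tendsto (fun _ : ℕ => (1:ℝ)) atTop (𝓝 1))
  · set x : ℕ → ℝ := fun n => -cc * (1 - Real.cos (t / Real.sqrt n)) with hxdef
    have hGx : ∀ n : ℕ, G (t / Real.sqrt n) = 1 + x n := by
      intro n; simp only [hxdef, G]; ring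
    have hGpos : ∀ n : ℕ, 0 < 1 + x n := fun n => (hGx n) ▸ G_pos _
    have hrepr : ∀ n : ℕ, (G (t / Real.sqrt n)) ^ n
        = Real.exp ((n : ℝ) * Real.log (1 + x n)) := by
      intro n
      rw [hGx n, ← Real.exp_log (hGpos n), ← Real.exp_nat_mul, Real.log_exp]
    have hu0 : Tendsto (fun n : ℕ => t / Real.sqrt n) atTop (𝓝 0) := by
      simpa using u_tendsto t 1 one_pos
    have hcos : Tendsto (fun n : ℕ => Real.cos (t / Real.sqrt n)) atTop (𝓝 1) := by
      have := (Real.continuous_cos.tendsto 0).comp hu0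
      simpa [Function.comp_def] using this
    have hx0 : Tendsto x atTop (𝓝 0) := by
      have := ((tendsto_const_nhds (x := (1:ℝ))).sub hcos).const_mul (-cc)
      simpa [hxdef] using this
    have hxne : ∀ᶠ n : ℕ in atTop, x n ≠ 0 := by
      have hsmall : ∀ᶠ n : ℕ in atTop, |t / Real.sqrt n| < π := by
        have := hu0.eventually (Metric.ball_mem_nhds (0:ℝ) Real.pi_pos)
        simpa [Real.dist_eq, abs_div] using this
      filter_upwards [hsmall, eventually_ge_atTop 1] with n hs hn
      have hsq : 0 < Real.sqrt n := Real.sqrt_pos.2 (by exact_mod_cast hn)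
      have hune : t / Real.sqrt n ≠ 0 := div_ne_zero ht hsq.ne'
      have hcoslt : Real.cos (t / Real.sqrt n) < 1 := by
        have := Real.cos_le_one_sub_mul_cos_sq hs.le
        have h2 : 0 < (t / Real.sqrt n) ^ 2 := by positivity
        have h3 : 0 < 2 / π ^ 2 := by have := Real.pi_pos; positivity
        nlinarith [mul_pos h3 h2]
      have := cc_pos
      simp only [hxdef]
      intro hcon
      nlinarith
    have h1x : Tendsto (fun n : ℕ => 1 + x n) atTop (𝓝[≠] 1) := by
      refine tendsto_nhdsWithin_iff.2 ⟨by simpa using tendsto_const_nhds.add hx0, ?_⟩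
      filter_upwards [hxne] with n hne
      simp [hne]
    have hratio : Tendsto (fun n : ℕ => Real.log (1 + x n) / x n) atTop (𝓝 1) := by
      have := slope_log.comp h1x
      refine this.congr fun n => ?_
      simp [Function.comp]
    have hnx : Tendsto (fun n : ℕ => (n : ℝ) * x n) atTop (𝓝 (-cc * (t ^ 2 / 2))) := by
      have := (key_limit t ht).const_mul (-cc)
      refine Tendsto.congr (fun n => ?_) this
      simp only [hxdef]; ring
    have hlog : Tendsto (fun n : ℕ => (n : ℝ) * Real.log (1 + x n)) atTop
        (𝓝 (-(cc / 2) * t ^ 2)) := by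
      have hmul := hnx.mul hratio
      have hmul' : Tendsto (fun n : ℕ => ((n : ℝ) * x n) * (Real.log (1 + x n) / x n)) atTop
          (𝓝 (-(cc / 2) * t ^ 2)) := by
        convert hmul using 2
        ring
      refine Tendsto.congr' ?_ hmul'
      filter_upwards [hxne] with n hne
      field_simp
    have := (Real.continuous_exp.tendsto _).comp hlog
    exact Tendsto.congr (fun n => (hrepr n).symm) (by simpa [Function.comp_def] using this)

open MeasureTheory in
lemma F_integral_tendsto :
    Tendsto (fun n : ℕ => ∫ t : ℝ, F n t) atTop (𝓝 (Real.sqrt (π / (cc / 2)))) := by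
  have hb : (0:ℝ) < 2 * cc / π ^ 2 := by
    have := cc_pos; have := Real.pi_pos; positivity
  have hInt : Integrable (fun t : ℝ => Real.exp (-(2 * cc / π ^ 2) * t ^ 2)) :=
    integrable_exp_neg_mul_sq hb
  have h := MeasureTheory.tendsto_integral_of_dominated_convergence
    (F := F) (f := fun t => Real.exp (-(cc / 2) * t ^ 2))
    (bound := fun t => Real.exp (-(2 * cc / π ^ 2) * t ^ 2))
    (fun n => F_meas n) hInt (fun n => ae_of_all _ (F_bound n))
    (ae_of_all _ F_tendsto)
  rwa [integral_gaussian (cc / 2)] at h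
lemma const_eq : 1 / (2 * π) * Real.sqrt (π / (cc / 2))
    = (2 : ℝ) ^ (-(1 : ℝ) / 4) / ((2 - Real.sqrt 2) * Real.sqrt (2 * π)) := by
  have hπ := Real.pi_pos
  have hs2 : Real.sqrt 2 ^ 2 = 2 := Real.sq_sqrt (by norm_num)
  have h2lt : Real.sqrt 2 < 2 := by nlinarith [sqrt2_lt]
  have hcc : cc = Real.sqrt 2 * (2 - Real.sqrt 2) ^ 2 := by
    unfold cc
    linear_combination (4 - Real.sqrt 2) * hs2
  have hsqcc : Real.sqrt cc = Real.sqrt (Real.sqrt 2) * (2 - Real.sqrt 2) := by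
    rw [hcc, Real.sqrt_mul (Real.sqrt_nonneg 2), Real.sqrt_sq (by linarith)]
  have h14 : (2 : ℝ) ^ (-(1 : ℝ) / 4) = (Real.sqrt (Real.sqrt 2))⁻¹ := by
    rw [show (-(1:ℝ)/4) = -(1/4 : ℝ) by ring, Real.rpow_neg (by norm_num)]
    congr 1
    rw [Real.sqrt_eq_rpow, Real.sqrt_eq_rpow, ← Real.rpow_mul (by norm_num : (0:ℝ) ≤ 2)]
    norm_num
  have h₁ : Real.sqrt (π / (cc / 2)) = Real.sqrt (2 * π) / Real.sqrt cc := by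
    rw [show π / (cc / 2) = (2 * π) / cc by ring, Real.sqrt_div (by positivity)]
  have hab : Real.sqrt (2 * π) = Real.sqrt 2 * Real.sqrt π := Real.sqrt_mul (by norm_num) π
  rw [h₁, hsqcc, h14, hab]
  have hπ2 : Real.sqrt π ^ 2 = π := Real.sq_sqrt hπ.le
  have ha0 : 0 < Real.sqrt π := Real.sqrt_pos.2 hπ
  have hs0 : 0 < Real.sqrt 2 := Real.sqrt_pos.2 two_pos
  have hb0 : 0 < Real.sqrt (Real.sqrt 2) := Real.sqrt_pos.2 hs0
  have hc0 : (0:ℝ) < 2 - Real.sqrt 2 := by linarith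
  have hb2 : Real.sqrt (Real.sqrt 2) ^ 2 = Real.sqrt 2 := Real.sq_sqrt hs0.le
  field_simp
  ring_nf
  linear_combination (Real.sqrt 2 ^ 2) * hπ2
    + (π) * hs2

lemma s2_def : s2 = Real.sqrt 2 := rfl

/-- asymptotics of the central Delannoy numbers
D(n,n) ~ (√2−1)^{−2n} · n^{−1/2} · 2^{−1/4}/((2−√2)√(2π))
(Example 3.2 of Pemantle–Wilson, "Asymptotics of multivariate sequences I"). -/
theorem statement15 :
    Tendsto (fun n : ℕ =>
        (delannoy n n : ℝ) * (Real.sqrt 2 - 1) ^ (2 * n) * Real.sqrt n)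
      atTop
      (𝓝 ((2 : ℝ) ^ (-(1 : ℝ) / 4) / ((2 - Real.sqrt 2) * Real.sqrt (2 * Real.pi)))) := by
  have hs2 : Real.sqrt 2 ^ 2 = 2 := Real.sq_sqrt (by norm_num)
  have hπ := Real.pi_pos
  have hlim : Tendsto (fun n : ℕ => 1 / (2 * π) * ∫ t : ℝ, F n t) atTop
      (𝓝 (1 / (2 * π) * Real.sqrt (π / (cc / 2)))) := F_integral_tendsto.const_mul _
  rw [← const_eq]
  refine Tendsto.congr' ?_ hlim
  filter_upwards [eventually_ge_atTop 1] with n hn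
  have hnR : (0:ℝ) < (n:ℝ) := by exact_mod_cast hn
  have hs : 0 < Real.sqrt n := Real.sqrt_pos.2 hnR
  have hD : (delannoy n n : ℝ)
      = 1 / (2 * π) * ∫ θ in (-π)..π, (3 + 2 * s2 * Real.cos θ) ^ n := by
    rw [delannoy_eq_dsum, integral_real, dsum]
    have hsq : ∑ k ∈ Finset.range (n+1), ((n.choose k : ℝ))^2 * 2 ^ k
        = ∑ k ∈ Finset.range (n+1), (n.choose k : ℝ) * (n.choose k : ℝ) * 2 ^ k := by
      refine Finset.sum_congr rfl fun k _ => ?_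
      ring
    rw [hsq]
    field_simp
  have hGid : ∀ θ : ℝ, (3 - 2 * s2) * (3 + 2 * s2 * Real.cos θ) = G θ := by
    intro θ
    simp only [G, cc, s2_def, s2]
    linear_combination (-4 * Real.cos θ) * hs2
  have hFint : (∫ t : ℝ, F n t) = Real.sqrt n • ∫ θ in (-π)..π, (G θ) ^ n := by
    unfold F
    rw [MeasureTheory.integral_indicator measurableSet_Ioc]
    have hab : -(π * Real.sqrt n) ≤ π * Real.sqrt n := by nlinarith
    rw [← intervalIntegral.integral_of_le hab]
    have e1 : -π = (-(π * Real.sqrt n)) / (Real.sqrt n) := by field_simp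
    have e2 : π = (π * Real.sqrt n) / (Real.sqrt n) := by field_simp
    rw [intervalIntegral.integral_comp_div (a := -(π * Real.sqrt n)) (b := π * Real.sqrt n)
      (f := fun u => G u ^ n) hs.ne', ← e1, ← e2]
  have hGn : (∫ θ in (-π)..π, (G θ) ^ n)
      = (3 - 2 * s2) ^ n * ∫ θ in (-π)..π, (3 + 2 * s2 * Real.cos θ) ^ n := by
    rw [← intervalIntegral.integral_const_mul]
    refine intervalIntegral.integral_congr fun θ _ => ?_
    rw [← mul_pow, hGid θ]
  have hpow : (Real.sqrt 2 - 1) ^ (2 * n) = (3 - 2 * s2) ^ n := by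
    rw [pow_mul]
    congr 1
    rw [s2_def]
    linear_combination hs2
  rw [hFint, smul_eq_mul, hGn, hD, hpow]
  ring
end
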